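/- Let E be a complete locally convex Hausdorff space and (f_n) a sequence of continuous weakly integrable functions ℝ^d → E, each having a Pettis integral, converging pointwise almost everywhere to a continuous function f : ℝ^d → E. Suppose for every continuous seminorm p on E there is g_p ∈ L¹ with p(f_n(x)) ≤ g_p(x) for all n and a.e. x. Then f has a Pettis integral and ∫ f dμ = lim_n ∫ f_n dμ. -/

import Mathlib

open MeasureTheory Filter

private lemma contFinsetSup {E ι : Type*} [AddCommGroup E] [Module ℝ E] [TopologicalSpace E]
    (q : ι → Seminorm ℝ E) (hq : ∀ i, Continuous (q i)) (s : Finset ι) :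
    Continuous ⇑(s.sup q) := by
  classical
  induction s using Finset.induction_on with
  | empty =>
      rw [Finset.sup_empty, Seminorm.bot_eq_zero]
      simp only [Seminorm.coe_zero]
      exact continuous_zero
  | insert a s' _ ih =>
      have hcoe : ⇑((insert a s').sup q) = fun x => max (q a x) ((s'.sup q) x) := by
        funext x
        rw [Finset.sup_insert, Seminorm.sup_apply]
      rw [hcoe]
      exact (hq a).max ih

private lemma hbAux {E : Type*} [AddCommGroup E] [Module ℝ E] [TopologicalSpace E]
    [IsTopologicalAddGroup E] (p : Seminorm ℝ E) (hp : Continuous ⇑p) (x : E) :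
    ∃ φ : E →L[ℝ] ℝ, φ x = p x ∧ ∀ y, φ y ≤ p y := by
  have H : ∀ c : ℝ, c • x = 0 → c • (p x : ℝ) = 0 := by
    intro c hc
    rcases eq_or_ne c 0 with rfl | hc0
    · simp
    · have hx0 : x = 0 := by
        have := congrArg (fun z => c⁻¹ • z) hc
        simpa [smul_smul, inv_mul_cancel₀ hc0] using this
      simp [hx0]
  set F := LinearPMap.mkSpanSingleton' (σ := RingHom.id ℝ) x (p x : ℝ) H with hF
  have hf : ∀ z : F.domain, F z ≤ p z := by
    rintro ⟨z, hz⟩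
    rcases Submodule.mem_span_singleton.mp hz with ⟨c, rfl⟩
    rw [LinearPMap.mkSpanSingleton'_apply]
    calc c • (p x : ℝ) = c * p x := rfl
      _ ≤ |c| * p x := mul_le_mul_of_nonneg_right (le_abs_self c) (apply_nonneg p x)
      _ = p (c • x) := by rw [map_smul_eq_mul, Real.norm_eq_abs]
  obtain ⟨g, hg1, hg2⟩ := exists_extension_of_le_sublinear F p
    (fun c hc y => by rw [map_smul_eq_mul, Real.norm_eq_abs, abs_of_pos hc])
    (fun a b => map_add_le_add p a b) hf
  have hx_mem : x ∈ F.domain := Submodule.mem_span_singleton_self x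
  have hgx : g x = p x := by
    have h1 := hg1 ⟨x, hx_mem⟩
    have h2 : F ⟨x, hx_mem⟩ = (p x : ℝ) := LinearPMap.mkSpanSingleton'_apply_self x (p x) H _
    rw [h2] at h1
    exact h1
  have habs : ∀ y, |g y| ≤ p y := by
    intro y
    rw [abs_le]
    constructor
    · have := hg2 (-y)
      rw [map_neg, map_neg_eq_map] at this
      linarith
    · exact hg2 y
  have hcont : Continuous g := by
    refine continuous_of_continuousAt_zero g ?_
    rw [ContinuousAt, map_zero, Metric.tendsto_nhds]
    intro ε hε
    have hmem : {y : E | p y < ε} ∈ nhds (0 : E) := by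
      have hopen : IsOpen {y : E | p y < ε} := isOpen_lt hp continuous_const
      exact hopen.mem_nhds (by simpa using hε)
    filter_upwards [hmem] with y hy
    rw [Real.dist_eq, sub_zero]
    exact lt_of_le_of_lt (habs y) hy
  exact ⟨⟨g, hcont⟩, hgx, hg2⟩

private lemma nhdsBasisAux {E : Type*} [AddCommGroup E] [Module ℝ E]
    [UniformSpace E] [IsUniformAddGroup E] [ContinuousSMul ℝ E]
    [LocallyConvexSpace ℝ E] {U : Set E} (hU : U ∈ nhds (0 : E)) :
    ∃ p : Seminorm ℝ E, Continuous ⇑p ∧ ∃ r > 0, ∀ y, p y < r → y ∈ U := by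
  have hq : WithSeminorms (gaugeSeminormFamily ℝ E) := with_gaugeSeminormFamily
  obtain ⟨⟨s, r⟩, hr, hsub⟩ := hq.hasBasis_zero_ball.mem_iff.mp hU
  refine ⟨s.sup (gaugeSeminormFamily ℝ E),
    contFinsetSup _ (fun i => hq.continuous_seminorm i) s, r, hr, fun y hy => ?_⟩
  exact hsub (by rwa [Seminorm.mem_ball_zero])

/-- Dominated convergence theorem for Pettis integrals in a complete lcHs. -/
theorem stmt6 (d : ℕ) {E : Type*} [AddCommGroup E] [Module ℝ E]
    [UniformSpace E] [IsUniformAddGroup E] [ContinuousSMul ℝ E]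
    [LocallyConvexSpace ℝ E] [T2Space E] [CompleteSpace E]
    (f : ℕ → EuclideanSpace ℝ (Fin d) → E) (g : EuclideanSpace ℝ (Fin d) → E)
    (e : ℕ → E)
    (hfc : ∀ n, Continuous (f n))
    (hPettis : ∀ n, ∀ φ : E →L[ℝ] ℝ,
      Integrable (fun x => φ (f n x)) ∧ (∫ x, φ (f n x)) = φ (e n))
    (hgc : Continuous g)
    (hae : ∀ᵐ x : EuclideanSpace ℝ (Fin d),
      Tendsto (fun n => f n x) atTop (nhds (g x)))
    (hdom : ∀ p : Seminorm ℝ E, Continuous ⇑p →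
      ∃ gp : EuclideanSpace ℝ (Fin d) → ℝ, Integrable gp ∧
        ∀ n, ∀ᵐ x : EuclideanSpace ℝ (Fin d), p (f n x) ≤ gp x) :
    ∃ I : E,
      (∀ φ : E →L[ℝ] ℝ,
        Integrable (fun x => φ (g x)) ∧ (∫ x, φ (g x)) = φ I) ∧
      Tendsto e atTop (nhds I) := by
  classical
  -- Key estimates for a continuous seminorm
  have key : ∀ (p : Seminorm ℝ E), Continuous ⇑p →
      Tendsto (fun n => ∫ x, p (f n x - g x)) atTop (nhds 0) ∧
      ∀ n m, p (e n - e m) ≤ (∫ x, p (f n x - g x)) + (∫ x, p (f m x - g x)) := by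
    intro p hp
    obtain ⟨gp, hgp_int, hgp_bd⟩ := hdom p hp
    have hbd_all : ∀ᵐ x : EuclideanSpace ℝ (Fin d), ∀ n, p (f n x) ≤ gp x :=
      (ae_all_iff).mpr hgp_bd
    have hsm : ∀ n, AEStronglyMeasurable (fun x => p (f n x - g x))
        (volume : Measure (EuclideanSpace ℝ (Fin d))) := fun n =>
      (hp.comp ((hfc n).sub hgc)).aestronglyMeasurable
    have hDbd : ∀ n, ∀ᵐ x : EuclideanSpace ℝ (Fin d), ‖p (f n x - g x)‖ ≤ gp x + gp x := by
      intro n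
      filter_upwards [hbd_all, hae] with x hx hlim
      have hg_le : p (g x) ≤ gp x :=
        le_of_tendsto ((hp.tendsto _).comp hlim) (Eventually.of_forall fun k => hx k)
      rw [Real.norm_eq_abs, abs_of_nonneg (apply_nonneg _ _)]
      calc p (f n x - g x) ≤ p (f n x) + p (g x) := map_sub_le_add p _ _
        _ ≤ gp x + gp x := add_le_add (hx n) hg_le
    have hint : ∀ n, Integrable (fun x => p (f n x - g x)) := fun n =>
      Integrable.mono' (hgp_int.add hgp_int) (hsm n) (hDbd n)
    constructor
    · have hlim0 : ∀ᵐ x : EuclideanSpace ℝ (Fin d),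
          Tendsto (fun n => p (f n x - g x)) atTop (nhds ((fun _ => (0:ℝ)) x)) := by
        filter_upwards [hae] with x hx
        have h1 : Tendsto (fun n => f n x - g x) atTop (nhds 0) := by
          simpa using hx.sub (tendsto_const_nhds (x := g x))
        simpa [map_zero, Function.comp_def] using (hp.tendsto 0).comp h1
      have := tendsto_integral_of_dominated_convergence (fun x => gp x + gp x)
        hsm (hgp_int.add hgp_int) hDbd hlim0
      simpa using this
    · intro n m
      obtain ⟨φ, hφ1, hφ2⟩ := hbAux p hp (e n - e m)
      have h1 : φ (e n - e m) = (∫ x, φ (f n x)) - ∫ x, φ (f m x) := by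
        rw [map_sub, (hPettis n φ).2, (hPettis m φ).2]
      have h2 : (∫ x, φ (f n x)) - (∫ x, φ (f m x))
          = ∫ x, (φ (f n x) - φ (f m x)) :=
        (integral_sub (hPettis n φ).1 (hPettis m φ).1).symm
      have h3 : (∫ x, (φ (f n x) - φ (f m x)))
          ≤ ∫ x, (p (f n x - g x) + p (f m x - g x)) := by
        refine integral_mono ((hPettis n φ).1.sub (hPettis m φ).1)
          ((hint n).add (hint m)) ?_
        intro x
        have hsplit : f n x - f m x = (f n x - g x) + (g x - f m x) := by abel
        calc φ (f n x) - φ (f m x) = φ (f n x - f m x) := (map_sub φ _ _).symm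
          _ ≤ p (f n x - f m x) := hφ2 _
          _ = p ((f n x - g x) + (g x - f m x)) := by rw [hsplit]
          _ ≤ p (f n x - g x) + p (g x - f m x) := map_add_le_add p _ _
          _ = p (f n x - g x) + p (f m x - g x) := by
              rw [← neg_sub (f m x) (g x), map_neg_eq_map]
      have h4 : (∫ x, (p (f n x - g x) + p (f m x - g x)))
          = (∫ x, p (f n x - g x)) + ∫ x, p (f m x - g x) :=
        integral_add (hint n) (hint m)
      calc p (e n - e m) = φ (e n - e m) := hφ1.symm
        _ = ∫ x, (φ (f n x) - φ (f m x)) := by rw [h1, h2]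
        _ ≤ ∫ x, (p (f n x - g x) + p (f m x - g x)) := h3
        _ = _ := h4
  -- Cauchy sequence
  have hcauchy : CauchySeq e := by
    rw [CauchySeq, cauchy_map_iff]
    refine ⟨atTop_neBot, ?_⟩
    rw [uniformity_eq_comap_nhds_zero E, tendsto_comap_iff]
    intro U hU
    obtain ⟨p, hp, r, hr, hball⟩ := nhdsBasisAux hU
    obtain ⟨A0, hA0⟩ := key p hp
    have hev : ∀ᶠ n in atTop, (∫ x, p (f n x - g x)) < r / 2 :=
      A0 (Iio_mem_nhds (by linarith))
    obtain ⟨N, hN⟩ := eventually_atTop.mp hev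
    rw [Filter.mem_map]
    rw [prod_atTop_atTop_eq]
    refine eventually_atTop.mpr ⟨(N, N), fun q hq => ?_⟩
    have h1 := hN q.1 hq.1
    have h2 := hN q.2 hq.2
    have := hA0 q.2 q.1
    exact hball (e q.2 - e q.1) (by linarith)
  obtain ⟨I, hI⟩ := cauchySeq_tendsto_of_complete hcauchy
  refine ⟨I, fun φ => ?_, hI⟩
  -- Pettis property of the limit
  set pφ : Seminorm ℝ E := (normSeminorm ℝ ℝ).comp (φ : E →ₗ[ℝ] ℝ) with hpφ
  have hpφ_apply : ∀ y, pφ y = |φ y| := fun y => by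
    simp [hpφ, Seminorm.comp_apply, Real.norm_eq_abs]
  have hpφ_cont : Continuous ⇑pφ := by
    have : ⇑pφ = fun y => |φ y| := funext hpφ_apply
    rw [this]
    exact φ.continuous.abs
  obtain ⟨gφ, hgφ_int, hgφ_bd⟩ := hdom pφ hpφ_cont
  have hbd_all : ∀ᵐ x : EuclideanSpace ℝ (Fin d), ∀ n, |φ (f n x)| ≤ gφ x := by
    filter_upwards [(ae_all_iff).mpr hgφ_bd] with x hx n
    simpa [hpφ_apply] using hx n
  have hglim : ∀ᵐ x : EuclideanSpace ℝ (Fin d),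
      Tendsto (fun n => φ (f n x)) atTop (nhds (φ (g x))) := by
    filter_upwards [hae] with x hx
    exact (φ.continuous.tendsto _).comp hx
  have hgbd : ∀ᵐ x : EuclideanSpace ℝ (Fin d), ‖φ (g x)‖ ≤ gφ x := by
    filter_upwards [hbd_all, hglim] with x hx hlim
    rw [Real.norm_eq_abs]
    exact le_of_tendsto (hlim.abs) (Eventually.of_forall fun n => hx n)
  have hg_meas : AEStronglyMeasurable (fun x => φ (g x))
      (volume : Measure (EuclideanSpace ℝ (Fin d))) :=
    (φ.continuous.comp hgc).aestronglyMeasurable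
  have hg_int : Integrable (fun x => φ (g x)) :=
    Integrable.mono' hgφ_int hg_meas hgbd
  refine ⟨hg_int, ?_⟩
  have htend1 : Tendsto (fun n => ∫ x, φ (f n x)) atTop (nhds (∫ x, φ (g x))) := by
    refine tendsto_integral_of_dominated_convergence gφ
      (fun n => (φ.continuous.comp (hfc n)).aestronglyMeasurable) hgφ_int ?_ hglim
    intro n
    filter_upwards [hbd_all] with x hx
    simpa [Real.norm_eq_abs] using hx n
  have htend2 : Tendsto (fun n => ∫ x, φ (f n x)) atTop (nhds (φ I)) := by
    have : (fun n => ∫ x, φ (f n x)) = fun n => φ (e n) :=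
      funext fun n => (hPettis n φ).2
    rw [this]
    exact (φ.continuous.tendsto _).comp hI
  exact tendsto_nhds_unique htend1 htend2
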